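/- Let D be a regular ultrafilter on λ and let M, N be elementarily equivalent structures in a countable language. Then M^λ/D is λ⁺-saturated if and only if N^λ/D is λ⁺-saturated. -/

import Mathlib

open FirstOrder Filter Cardinal

universe u

/-- `M` realizes all types (in one free variable) over parameter sets of
cardinality at most `lam`, i.e. `M` is `lam⁺`-saturated. -/
def realizesTypesLE (L : FirstOrder.Language.{u, u}) (M : Type u) [L.Structure M]
    (lam : Cardinal.{u}) : Prop :=
  ∀ A : Set M, #A ≤ lam →
    ∀ p : Set (L.Formula (↥A ⊕ Fin 1)),
      (∀ s : Finset (L.Formula (↥A ⊕ Fin 1)), ↑s ⊆ p →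
        ∃ x : M, ∀ φ ∈ s, φ.Realize (Sum.elim Subtype.val fun _ => x)) →
      ∃ x : M, ∀ φ ∈ p, φ.Realize (Sum.elim Subtype.val fun _ => x)

namespace KeislerAux

open FirstOrder.Language

variable {L : FirstOrder.Language.{u, u}} {ι β : Type u}

variable {L : FirstOrder.Language.{u, u}} {ι β : Type u}

noncomputable def keislerV [DecidableEq β] (E : ι → L.Formula (β ⊕ Fin 1)) (Fs : Finset ι) :
    Finset (β ⊕ Fin 1) :=
  Fs.biUnion fun i => (E i).freeVarFinset

lemma keislerV_sub [DecidableEq β] {E : ι → L.Formula (β ⊕ Fin 1)} {Fs : Finset ι} {i : ι}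
    (h : i ∈ Fs) : ↑(E i).freeVarFinset ⊆ ((keislerV E Fs : Finset (β ⊕ Fin 1)) : Set (β ⊕ Fin 1)) := by
  have h2 : (E i).freeVarFinset ⊆ keislerV E Fs := by
    simp only [keislerV]
    exact Finset.subset_biUnion_of_mem (fun i => (E i).freeVarFinset) h
  exact Finset.coe_subset.2 h2

noncomputable def keislerXi [DecidableEq β] [DecidableEq ι] (E : ι → L.Formula (β ⊕ Fin 1))
    (Fs s : Finset ι) : L.Formula ↥((keislerV E Fs : Finset (β ⊕ Fin 1)) : Set (β ⊕ Fin 1)) :=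
  Formula.iExs (Fin 1) (Formula.relabel
    (fun x : ↥((keislerV E Fs : Finset (β ⊕ Fin 1)) : Set (β ⊕ Fin 1)) =>
      Sum.elim (fun _ => Sum.inl x) Sum.inr x.1)
    ((s.toList.map fun i =>
        if h : i ∈ Fs then ((E i).restrictFreeVar (Set.inclusion (keislerV_sub h))) else ⊤).foldr
      (· ⊓ ·) ⊤))

lemma realize_keislerXi [DecidableEq β] [DecidableEq ι] {E : ι → L.Formula (β ⊕ Fin 1)}
    {Fs s : Finset ι} (hs : s ⊆ Fs) {P : Type u} [L.Structure P] (u : β → P) (d : Fin 1 → P) :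
    (keislerXi E Fs s).Realize (fun x => Sum.elim u d x.1) ↔
      ∃ y : P, ∀ i ∈ s, (E i).Realize (Sum.elim u fun _ => y) := by
  rw [keislerXi, Formula.realize_iExs]
  simp only [Formula.realize_relabel, Function.comp_def]
  have key : ∀ (yv : Fin 1 → P),
      (fun a : ↥((keislerV E Fs : Finset (β ⊕ Fin 1)) : Set (β ⊕ Fin 1)) =>
          Sum.elim (fun x => Sum.elim u d x.1) yv (Sum.elim (fun _ => Sum.inl a) Sum.inr a.1))
        = (Sum.elim u (fun _ => yv 0)) ∘ Subtype.val := by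
    intro yv
    funext x
    rcases x with ⟨b | j, h⟩
    · simp
    · simp [Subsingleton.elim j 0]
  constructor
  · rintro ⟨yv, hyv⟩
    refine ⟨yv 0, fun i hi => ?_⟩
    rw [Formula.Realize] at hyv
    rw [BoundedFormula.realize_foldr_inf] at hyv
    have hmem := hyv _ (List.mem_map_of_mem (Finset.mem_toList.2 hi))
    rw [dif_pos (hs hi)] at hmem
    rw [key yv] at hmem
    exact (BoundedFormula.realize_restrictFreeVar' (keislerV_sub (hs hi))).1 hmem
  · rintro ⟨y, hy⟩
    refine ⟨fun _ => y, ?_⟩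
    rw [Formula.Realize, BoundedFormula.realize_foldr_inf]
    intro ψ hψ
    obtain ⟨i, hi, rfl⟩ := List.mem_map.1 hψ
    rw [Finset.mem_toList] at hi
    rw [dif_pos (hs hi)]
    rw [key (fun _ => y)]
    exact (BoundedFormula.realize_restrictFreeVar' (keislerV_sub (hs hi))).2 (hy i hi)

/-- Key coordinatewise transfer: given a valuation in `N` we can find a valuation in `M`
with the same finite satisfiability pattern for subsets of `Fs`. -/
lemma keisler_sat_transfer [DecidableEq β] [DecidableEq ι] {M N : Type u} [L.Structure M]
    [L.Structure N] [Nonempty M] [Nonempty N] (heq : M ≅[L] N)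
    (E : ι → L.Formula (β ⊕ Fin 1)) (Fs : Finset ι) (vA : β → N) :
    ∃ w : β → M, ∀ s ⊆ Fs,
      ((∃ y : N, ∀ i ∈ s, (E i).Realize (Sum.elim vA fun _ => y)) ↔
        ∃ y : M, ∀ i ∈ s, (E i).Realize (Sum.elim w fun _ => y)) := by
  classical
  set χ : L.Formula ↥((keislerV E Fs : Finset (β ⊕ Fin 1)) : Set (β ⊕ Fin 1)) :=
    (Fs.powerset.toList.map fun s =>
      if (∃ y : N, ∀ i ∈ s, (E i).Realize (Sum.elim vA fun _ => y)) then keislerXi E Fs s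
      else ∼(keislerXi E Fs s)).foldr (· ⊓ ·) ⊤ with hχ
  have hN : χ.Realize (fun x => Sum.elim vA (fun _ => Classical.arbitrary N) x.1) := by
    rw [hχ, Formula.Realize, BoundedFormula.realize_foldr_inf]
    intro ψ hψ
    obtain ⟨s, hsmem, rfl⟩ := List.mem_map.1 hψ
    have hssub := Finset.mem_powerset.1 (Finset.mem_toList.1 hsmem)
    split_ifs with hyes
    · exact (realize_keislerXi hssub vA _).2 hyes
    · rw [BoundedFormula.realize_not]
      intro hcon
      exact hyes ((realize_keislerXi hssub vA _).1 hcon)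
  set σ : L.Sentence := Formula.iExs (↥((keislerV E Fs : Finset (β ⊕ Fin 1)) : Set (β ⊕ Fin 1)))
    (χ.relabel Sum.inr) with hσ
  have hNσ : N ⊨ σ := by
    rw [hσ, Sentence.Realize, Formula.realize_iExs]
    refine ⟨fun x => Sum.elim vA (fun _ => Classical.arbitrary N) x.1, ?_⟩
    simpa using hN
  have hMσ : M ⊨ σ := (heq.realize_sentence σ).2 hNσ
  rw [hσ, Sentence.Realize, Formula.realize_iExs] at hMσ
  obtain ⟨iM, hiM⟩ := hMσ
  simp only [Formula.realize_relabel, Function.comp_def, Sum.elim_inr] at hiM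
  set w : β → M := fun b =>
    if h : Sum.inl b ∈ keislerV E Fs then iM ⟨Sum.inl b, h⟩ else Classical.arbitrary M with hw
  set dM : Fin 1 → M := fun j =>
    if h : Sum.inr j ∈ keislerV E Fs then iM ⟨Sum.inr j, h⟩ else Classical.arbitrary M with hdM
  have hiM' : (fun x : ↥((keislerV E Fs : Finset (β ⊕ Fin 1)) : Set (β ⊕ Fin 1)) =>
      Sum.elim w dM x.1) = iM := by
    funext x
    rcases x with ⟨b | j, h⟩
    · exact dif_pos (Finset.mem_coe.1 h)
    · exact dif_pos (Finset.mem_coe.1 h)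
  refine ⟨w, fun s hssub => ?_⟩
  have hχM : χ.Realize iM := hiM
  rw [hχ, Formula.Realize, BoundedFormula.realize_foldr_inf] at hχM
  have hmem := hχM _ (List.mem_map_of_mem (Finset.mem_toList.2 (Finset.mem_powerset.2 hssub)))
  by_cases hyes : (∃ y : N, ∀ i ∈ s, (E i).Realize (Sum.elim vA fun _ => y))
  · rw [if_pos hyes] at hmem
    rw [← hiM'] at hmem
    exact ⟨fun _ => (realize_keislerXi hssub w dM).1 hmem, fun _ => hyes⟩
  · rw [if_neg hyes, BoundedFormula.realize_not, ← hiM'] at hmem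
    constructor
    · intro h; exact absurd h hyes
    · intro h; exact absurd ((realize_keislerXi hssub w dM).2 h) hmem


lemma card_formula_le {L : FirstOrder.Language.{u, u}} (hL : L.card ≤ ℵ₀) {β : Type u}
    {κ : Cardinal.{u}} (hκ : ℵ₀ ≤ κ) (hβ : #β ≤ κ) : #(L.Formula β) ≤ κ := by
  have h1 : #(L.Formula β) ≤ #(Σ n, L.BoundedFormula β n) :=
    Cardinal.mk_le_of_injective (f := fun φ => (⟨0, φ⟩ : Σ n, L.BoundedFormula β n))
      (fun a b h => by simpa using h)
  refine h1.trans ((BoundedFormula.card_le).trans ?_)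
  simp only [Cardinal.lift_id]
  exact max_le hκ (Cardinal.add_le_of_le hκ hβ (hL.trans hκ))


end KeislerAux

open FirstOrder.Language

lemma keisler_mpr {L : FirstOrder.Language.{u, u}} (hL : L.card ≤ ℵ₀) {α : Type u} [Infinite α]
    (D : Ultrafilter α)
    (hreg : ∃ X : α → Set α, (∀ i, X i ∈ D) ∧ ∀ s : Set α, s.Infinite → ⋂ i ∈ s, X i = ∅)
    (M N : Type u) [L.Structure M] [L.Structure N] [Nonempty M] [Nonempty N]
    (heq : M ≅[L] N)
    (hM : realizesTypesLE L ((D : Filter α).Product fun _ => M) #α) :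
    realizesTypesLE L ((D : Filter α).Product fun _ => N) #α := by
  classical
  obtain ⟨X, hXD, hXreg⟩ := hreg
  intro A hA p hfin
  by_cases hp : p.Nonempty
  swap
  · rw [Set.not_nonempty_iff_eq_empty] at hp
    subst hp
    exact ⟨Classical.arbitrary _, by simp⟩
  -- enumeration of p by α
  have hpcard : #p ≤ #α := by
    refine (Cardinal.mk_set_le p).trans (KeislerAux.card_formula_le hL (Cardinal.aleph0_le_mk α) ?_)
    simp only [Cardinal.mk_sum, Cardinal.lift_uzero, Cardinal.mk_fintype, Fintype.card_fin,
      Nat.cast_one, Cardinal.lift_one]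
    exact Cardinal.add_le_of_le (Cardinal.aleph0_le_mk α) hA
      (le_trans Cardinal.one_le_aleph0 (Cardinal.aleph0_le_mk α))
  haveI : Nonempty ↥p := hp.to_subtype
  obtain ⟨g⟩ := (Cardinal.le_def _ _).1 hpcard
  let E : α → L.Formula (↥A ⊕ Fin 1) := fun i => ↑(Function.invFun g i)
  have hEmem : ∀ i, E i ∈ p := fun i => (Function.invFun g i).2
  have hEsurj : ∀ φ ∈ p, ∃ i, E i = φ := by
    intro φ hφ
    refine ⟨g ⟨φ, hφ⟩, ?_⟩
    simp only [E]
    rw [Function.leftInverse_invFun g.injective ⟨φ, hφ⟩]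
  -- representatives of parameters
  let bv : ↥A → α → N := fun a => Quotient.out (a : (D : Filter α).Product fun _ => N)
  have hbv : ∀ a : ↥A, (↑(bv a) : (D : Filter α).Product fun _ => N) = a.1 := fun a =>
    Quotient.out_eq _
  -- finite index sets
  have hSfin : ∀ t, {i | t ∈ X i}.Finite := by
    intro t
    by_contra h
    have h0 := hXreg _ h
    have ht : t ∈ ⋂ i ∈ {i | t ∈ X i}, X i := by
      simp only [Set.mem_iInter]
      exact fun i hi => hi
    rw [h0] at ht
    exact ht
  let Fs : α → Finset α := fun t => (hSfin t).toFinset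
  have hFs : ∀ t i, i ∈ Fs t ↔ t ∈ X i := fun t i => (hSfin t).mem_toFinset
  -- per-coordinate transfer
  have htr := fun t => KeislerAux.keisler_sat_transfer (β := ↥A) (ι := α) heq E (Fs t) (fun a => bv a t)
  choose w hw using htr
  -- parameters in the M-ultrapower
  let c : ↥A → (D : Filter α).Product (fun _ => M) := fun a => ↑(fun t => w t a)
  let A' : Set ((D : Filter α).Product fun _ => M) := Set.range c
  have hA' : #A' ≤ #α := Cardinal.mk_range_le.trans hA
  let gg : ↥A → ↥A' := fun a => ⟨c a, Set.mem_range_self a⟩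
  let q : Set (L.Formula (↥A' ⊕ Fin 1)) := (fun φ => φ.relabel (Sum.map gg id)) '' p
  -- the transferred type is finitely satisfiable in the M-ultrapower
  have hqsat : ∀ s : Finset (L.Formula (↥A' ⊕ Fin 1)), ↑s ⊆ q →
      ∃ x, ∀ φ ∈ s, φ.Realize (Sum.elim Subtype.val fun _ => x) := by
    intro s hs
    have hidx : ∀ ψ : L.Formula (↥A' ⊕ Fin 1), ψ ∈ s →
        ∃ i : α, (E i).relabel (Sum.map gg id) = ψ := by
      intro ψ hψ
      obtain ⟨φ, hφp, rfl⟩ := hs hψ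
      obtain ⟨i, rfl⟩ := hEsurj φ hφp
      exact ⟨i, rfl⟩
    choose F hF using hidx
    let s0 : Finset α := s.attach.image fun ψ => F ψ.1 ψ.2
    have hsub1 : ↑(s0.image E) ⊆ p := by
      intro φ hφ
      simp only [Finset.coe_image, Set.mem_image, Finset.mem_coe] at hφ
      obtain ⟨i, _, rfl⟩ := hφ
      exact hEmem i
    obtain ⟨x0, hx0⟩ := hfin (s0.image E) hsub1
    let x0f : α → N := Quotient.out x0
    have hx0f : (↑x0f : (D : Filter α).Product fun _ => N) = x0 := Quotient.out_eq _
    have hLos : ∀ i ∈ s0, ∀ᶠ t in (D : Filter α),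
        (E i).Realize (Sum.elim (fun a => bv a t) fun _ => x0f t) := by
      intro i hi
      have h1 : (E i).Realize (Sum.elim (Subtype.val : ↥A → _) fun _ => x0) :=
        hx0 (E i) (Finset.mem_image_of_mem E hi)
      have h2 : (Sum.elim (Subtype.val : ↥A → _) (fun _ => x0) :
            ↥A ⊕ Fin 1 → (D : Filter α).Product fun _ => N)
          = fun v => (↑(Sum.elim bv (fun _ => x0f) v) : (D : Filter α).Product fun _ => N) := by
        funext v
        cases v with
        | inl a => exact (hbv a).symm
        | inr j => exact hx0f.symm
      rw [h2] at h1
      replace h1 := (Ultraproduct.realize_formula_cast (M := fun _ => N) (E i)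
        (Sum.elim bv (fun _ => x0f))).1 h1
      refine h1.mono fun t ht => ?_
      have h3 : (fun v : ↥A ⊕ Fin 1 => Sum.elim bv (fun _ => x0f) v t)
          = Sum.elim (fun a => bv a t) fun _ => x0f t := by
        funext v; cases v <;> rfl
      rwa [h3] at ht
    have hT : (⋂ i ∈ s0,
        ({t | (E i).Realize (Sum.elim (fun a => bv a t) fun _ => x0f t)} ∩ X i)) ∈ (D : Filter α) := by
      refine (Filter.biInter_finset_mem s0).2 fun i hi => Filter.inter_mem ?_ (hXD i)
      exact (hLos i hi)
    have hwit : ∀ t ∈ (⋂ i ∈ s0,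
        ({t | (E i).Realize (Sum.elim (fun a => bv a t) fun _ => x0f t)} ∩ X i)),
        ∃ y : M, ∀ i ∈ s0, (E i).Realize (Sum.elim (w t) fun _ => y) := by
      intro t ht
      simp only [Set.mem_iInter, Set.mem_inter_iff, Set.mem_setOf_eq] at ht
      refine (hw t s0 fun i hi => (hFs t i).2 (ht i hi).2).1 ⟨x0f t, fun i hi => (ht i hi).1⟩
    let yM : α → M := fun t =>
      if h : ∃ y : M, ∀ i ∈ s0, (E i).Realize (Sum.elim (w t) fun _ => y) then Classical.choose h
      else Classical.arbitrary M
    refine ⟨↑yM, fun ψ hψ => ?_⟩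
    rw [← hF ψ hψ, Formula.realize_relabel]
    have hcomp : ((Sum.elim (Subtype.val : ↥A' → _)
            (fun _ => (↑yM : (D : Filter α).Product fun _ => M)) :
            ↥A' ⊕ Fin 1 → (D : Filter α).Product fun _ => M) ∘ Sum.map gg id :
            ↥A ⊕ Fin 1 → (D : Filter α).Product fun _ => M)
        = fun v => (↑(Sum.elim (fun a t => w t a) (fun _ => yM) v) :
            (D : Filter α).Product fun _ => M) := by
      funext v; cases v <;> rfl
    rw [hcomp]
    refine (Ultraproduct.realize_formula_cast (M := fun _ => M) _
      (Sum.elim (fun a t => w t a) (fun _ => yM))).2 ?_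
    have hFmem : F ψ hψ ∈ s0 := Finset.mem_image.2 ⟨⟨ψ, hψ⟩, Finset.mem_attach _ _, rfl⟩
    refine Filter.mem_of_superset hT fun t ht => ?_
    have hy := hwit t ht
    have hspec := Classical.choose_spec hy (F ψ hψ) hFmem
    have h3 : (fun v : ↥A ⊕ Fin 1 => Sum.elim (fun a t => w t a) (fun _ => yM) v t)
        = Sum.elim (w t) fun _ => yM t := by
      funext v; cases v <;> rfl
    rw [Set.mem_setOf_eq, h3]
    simpa only [yM, dif_pos hy] using hspec
  -- apply saturation of the M-ultrapower
  obtain ⟨d, hd⟩ := hM A' hA' q hqsat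
  let df : α → M := Quotient.out d
  have hdf : (↑df : (D : Filter α).Product fun _ => M) = d := Quotient.out_eq _
  have hLos2 : ∀ i : α, ∀ᶠ t in (D : Filter α),
      (E i).Realize (Sum.elim (w t) fun _ => df t) := by
    intro i
    have h1 : ((E i).relabel (Sum.map gg id)).Realize (Sum.elim Subtype.val fun _ => d) :=
      hd _ ⟨E i, hEmem i, rfl⟩
    rw [Formula.realize_relabel] at h1
    have hcomp : ((Sum.elim (Subtype.val : ↥A' → _) (fun _ => d) :
            ↥A' ⊕ Fin 1 → (D : Filter α).Product fun _ => M) ∘ Sum.map gg id :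
            ↥A ⊕ Fin 1 → (D : Filter α).Product fun _ => M)
        = fun v => (↑(Sum.elim (fun a t => w t a) (fun _ => df) v) :
            (D : Filter α).Product fun _ => M) := by
      funext v
      cases v with
      | inl a => rfl
      | inr j => exact hdf.symm
    rw [hcomp] at h1
    replace h1 := (Ultraproduct.realize_formula_cast (M := fun _ => M) (E i)
      (Sum.elim (fun a t => w t a) (fun _ => df))).1 h1
    refine h1.mono fun t ht => ?_
    have h3 : (fun v : ↥A ⊕ Fin 1 => Sum.elim (fun a t => w t a) (fun _ => df) v t)
        = Sum.elim (w t) fun _ => df t := by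
      funext v; cases v <;> rfl
    rwa [h3] at ht
  -- transfer back to N coordinatewise
  let s2 : α → Finset α := fun t =>
    (Fs t).filter fun i => (E i).Realize (Sum.elim (w t) fun _ => df t)
  have hNsat : ∀ t, ∃ y : N, ∀ i ∈ s2 t,
      (E i).Realize (Sum.elim (fun a => bv a t) fun _ => y) :=
    fun t => (hw t (s2 t) (Finset.filter_subset _ _)).2
      ⟨df t, fun i hi => (Finset.mem_filter.1 hi).2⟩
  let ev : α → N := fun t => Classical.choose (hNsat t)
  refine ⟨↑ev, fun φ hφ => ?_⟩
  obtain ⟨i, rfl⟩ := hEsurj φ hφ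
  have hval : (Sum.elim (Subtype.val : ↥A → _) (fun _ => (↑ev : (D : Filter α).Product fun _ => N)) :
        ↥A ⊕ Fin 1 → (D : Filter α).Product fun _ => N)
      = fun v => (↑(Sum.elim bv (fun _ => ev) v) : (D : Filter α).Product fun _ => N) := by
    funext v
    cases v with
    | inl a => exact (hbv a).symm
    | inr j => rfl
  rw [hval]
  refine (Ultraproduct.realize_formula_cast (M := fun _ => N) (E i)
    (Sum.elim bv (fun _ => ev))).2 ?_
  filter_upwards [hLos2 i, (hXD i : X i ∈ (D : Filter α))] with t h1 h2
  have hi2 : i ∈ s2 t := Finset.mem_filter.2 ⟨(hFs t i).2 h2, h1⟩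
  have hspec := Classical.choose_spec (hNsat t) i hi2
  have h3 : (fun v : ↥A ⊕ Fin 1 => Sum.elim bv (fun _ => ev) v t)
      = Sum.elim (fun a => bv a t) fun _ => ev t := by
    funext v; cases v <;> rfl
  rwa [h3]


/-- Keisler: for a regular ultrafilter `D` on `α` and elementarily equivalent
structures `M`, `N` in a countable language, `M^α/D` is `#α⁺`-saturated iff
`N^α/D` is. -/
theorem stmt_6 {L : FirstOrder.Language.{u, u}} (hL : L.card ≤ ℵ₀)
    {α : Type u} [Infinite α] (D : Ultrafilter α)
    (hreg : ∃ X : α → Set α, (∀ i, X i ∈ D) ∧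
      ∀ s : Set α, s.Infinite → ⋂ i ∈ s, X i = ∅)
    (M N : Type u) [L.Structure M] [L.Structure N] [Nonempty M] [Nonempty N]
    (heq : M ≅[L] N) :
    realizesTypesLE L ((D : Filter α).Product fun _ => M) #α ↔
      realizesTypesLE L ((D : Filter α).Product fun _ => N) #α := by
  constructor
  · intro h
    exact keisler_mpr hL D hreg M N heq h
  · intro h
    exact keisler_mpr hL D hreg N M heq.symm h
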